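/- arXiv:math/0301059 — 4 statements merged into one kernel-verified Lean document; each statement's English description precedes it below -/
import Mathlib

section
/- For c ∈ ℝ, c ≠ 0, let h₀ ∈ SL(2,ℂ) be the unipotent matrix with rows (1, c) and (0, 1), and let S₁ ⊂ SL(2,ℂ) be the diagonal subgroup {diag(a,1/a) : a ∈ ℂ*}. Then h₀ S₁ h₀⁻¹ ∩ SU(2) = {±I}, the center of SU(2). -/
lemma inv_upper (c : ℂ) : (!![1, c; 0, 1])⁻¹ = !![1, -c; 0, 1] := by
  apply Matrix.inv_eq_right_inv
  ext i j
  fin_cases i <;> fin_cases j <;> norm_num [Matrix.one_apply]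

/-- For real `c ≠ 0` and `h₀ = (1,c;0,1)`, the intersection `h₀ S₁ h₀⁻¹ ∩ SU(2)` is the
center `{±I}` of `SU(2)`. -/
theorem stmt_6 (c : ℝ) (hc : c ≠ 0) :
    {g : Matrix (Fin 2) (Fin 2) ℂ |
        (∃ a : ℂ, a ≠ 0 ∧
          g = !![1, (c : ℂ); 0, 1] * !![a, 0; 0, a⁻¹] * (!![1, (c : ℂ); 0, 1])⁻¹) ∧
        g ∈ Matrix.unitaryGroup (Fin 2) ℂ}
      = {1, -1} := by
  have hc' : (c : ℂ) ≠ 0 := by exact_mod_cast hc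
  ext g
  simp only [Set.mem_setOf_eq, Set.mem_insert_iff, Set.mem_singleton_iff]
  constructor
  · rintro ⟨⟨a, ha, rfl⟩, hu⟩
    rw [inv_upper] at hu ⊢
    have hg : !![1, (c:ℂ); 0, 1] * !![a, 0; 0, a⁻¹] * !![1, -(c:ℂ); 0, 1]
        = !![a, -(a*c) + c * a⁻¹; 0, a⁻¹] := by
      simp [Matrix.mul_fin_two]
    rw [hg] at hu ⊢
    rw [Matrix.mem_unitaryGroup_iff] at hu
    have h10 := congrFun (congrFun hu 1) 0
    simp [Matrix.mul_apply, Fin.sum_univ_two, Matrix.one_apply] at h10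
    have hsa : starRingEnd ℂ a ≠ 0 := by
      exact star_ne_zero.mpr ha
    have ha2 : a * a = 1 := by
      rcases h10 with h | h
      · exact absurd h ha
      · have h' : starRingEnd ℂ a * starRingEnd ℂ a = 1 := by
          field_simp at h
          have h2 : (c:ℂ) * ((starRingEnd ℂ) a * (starRingEnd ℂ) a) = c * 1 := by
            linear_combination -h
          exact mul_left_cancel₀ hc' h2
        have := congrArg (starRingEnd ℂ) h'
        simpa using this
    have hainv : a⁻¹ = a := inv_eq_of_mul_eq_one_left ha2
    rcases mul_self_eq_one_iff.mp ha2 with rfl | rfl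
    · left
      rw [hainv]
      ext i j
      fin_cases i <;> fin_cases j <;> norm_num [Matrix.one_apply]
    · right
      rw [hainv]
      ext i j
      fin_cases i <;> fin_cases j <;> norm_num [Matrix.one_apply]
  · rintro (rfl | rfl)
    · exact ⟨⟨1, one_ne_zero, by simp [inv_upper, Matrix.mul_fin_two, Matrix.one_fin_two]⟩,
        one_mem _⟩
    · refine ⟨⟨-1, by norm_num, ?_⟩, ?_⟩
      · rw [inv_upper]
        have : (-1 : ℂ)⁻¹ = -1 := by norm_num
        rw [this]
        ext i j; fin_cases i <;> fin_cases j <;> simp [Matrix.mul_fin_two]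
      · rw [Matrix.mem_unitaryGroup_iff]
        simp
end

section
/- For c ∈ ℝ, c ≠ 0, let h₀ ∈ SL(2,ℂ) be the matrix with rows (1, c), (0, 1) and let S₂ ⊂ SL(2,ℂ) be the union of the diagonal matrices diag(a,1/a) and antidiagonal matrices with entries (b, −1/b), a, b ∈ ℂ*. Then h₀ S₂ h₀⁻¹ ∩ SU(2) is a cyclic group of order 4, consisting of ±I and the two matrices ±(1/√(1+c²))·M where M has rows (ic, i) and (i, −ic). -/
open Complex Matrix

private noncomputable def s7M (c : ℝ) : Matrix (Fin 2) (Fin 2) ℂ :=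
  ((1 / Real.sqrt (1 + c ^ 2) : ℝ) : ℂ) •
    !![Complex.I * (c : ℂ), Complex.I; Complex.I, -(Complex.I * (c : ℂ))]

private def s7S (c : ℝ) : Set (Matrix (Fin 2) (Fin 2) ℂ) :=
  {g | (∃ a : ℂ, a ≠ 0 ∧
          (g = !![1, (c : ℂ); 0, 1] * !![a, 0; 0, a⁻¹] * (!![1, (c : ℂ); 0, 1])⁻¹ ∨
           g = !![1, (c : ℂ); 0, 1] * !![0, a; -a⁻¹, 0] * (!![1, (c : ℂ); 0, 1])⁻¹)) ∧
       g ∈ Matrix.unitaryGroup (Fin 2) ℂ}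

private lemma s7_mem_iff (c : ℝ) (g : Matrix (Fin 2) (Fin 2) ℂ) :
    g ∈ s7S c ↔ (∃ a : ℂ, a ≠ 0 ∧
          (g = !![1, (c : ℂ); 0, 1] * !![a, 0; 0, a⁻¹] * (!![1, (c : ℂ); 0, 1])⁻¹ ∨
           g = !![1, (c : ℂ); 0, 1] * !![0, a; -a⁻¹, 0] * (!![1, (c : ℂ); 0, 1])⁻¹)) ∧
       g ∈ Matrix.unitaryGroup (Fin 2) ℂ := Iff.rfl

private lemma s7_hinv (c : ℝ) : (!![1, (c:ℂ); 0, 1])⁻¹ = !![1, -(c:ℂ); 0, 1] := by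
  apply Matrix.inv_eq_right_inv
  rw [Matrix.mul_fin_two, Matrix.one_fin_two]; norm_num

private lemma s7_conj1 (c : ℝ) (a : ℂ) :
    !![1, (c:ℂ); 0, 1] * !![a, 0; 0, a⁻¹] * (!![1, (c:ℂ); 0, 1])⁻¹
      = !![a, c*a⁻¹ - a*c; 0, a⁻¹] := by
  rw [s7_hinv, Matrix.mul_fin_two, Matrix.mul_fin_two]
  norm_num; ring_nf

private lemma s7_conj2 (c : ℝ) (a : ℂ) :
    !![1, (c:ℂ); 0, 1] * !![0, a; -a⁻¹, 0] * (!![1, (c:ℂ); 0, 1])⁻¹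
      = !![-(c*a⁻¹), c^2*a⁻¹ + a; -a⁻¹, c*a⁻¹] := by
  rw [s7_hinv, Matrix.mul_fin_two, Matrix.mul_fin_two]
  norm_num; ring_nf
  exact ⟨trivial, trivial⟩

private lemma s7_Meq (c : ℝ) :
    s7M c = !![-(c*(I*(Real.sqrt (1 + c ^ 2):ℂ))⁻¹),
        c^2*(I*(Real.sqrt (1 + c ^ 2):ℂ))⁻¹ + I*(Real.sqrt (1 + c ^ 2):ℂ);
        -(I*(Real.sqrt (1 + c ^ 2):ℂ))⁻¹, c*(I*(Real.sqrt (1 + c ^ 2):ℂ))⁻¹] := by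
  set T : ℝ := Real.sqrt (1 + c ^ 2) with hTdef
  have hT2 : T^2 = 1 + c^2 := Real.sq_sqrt (by positivity)
  have hT0 : (0:ℝ) < T := Real.sqrt_pos.mpr (by positivity)
  have hTne : (T:ℂ) ≠ 0 := by exact_mod_cast hT0.ne'
  have hT2c : (T:ℂ)^2 = 1 + (c:ℂ)^2 := by exact_mod_cast congrArg (Complex.ofReal) hT2
  unfold s7M
  rw [← hTdef]
  ext i j
  fin_cases i <;> fin_cases j <;>
    · push_cast
      simp only [Matrix.smul_apply, Matrix.cons_val', Matrix.cons_val_zero, Matrix.cons_val_one,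
        Matrix.head_cons, Matrix.head_fin_const, Matrix.empty_val', Matrix.cons_val_fin_one,
        smul_eq_mul, Matrix.of_apply]
      field_simp
      ring_nf
      try simp only [Complex.I_sq]
      first
        | done
        | ring1
        | linear_combination (T:ℂ) * hT2c
        | linear_combination (1 - (T:ℂ)) * hT2c
        | linear_combination hT2c

private lemma s7_Munit (c : ℝ) : s7M c * star (s7M c) = 1 := by
  set T : ℝ := Real.sqrt (1 + c ^ 2) with hTdef
  have hT2 : T^2 = 1 + c^2 := Real.sq_sqrt (by positivity)
  have hT0 : (0:ℝ) < T := Real.sqrt_pos.mpr (by positivity)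
  have hTne : T ≠ 0 := hT0.ne'
  unfold s7M
  rw [← hTdef]
  ext i j
  fin_cases i <;> fin_cases j <;>
  · simp [Matrix.mul_apply, Fin.sum_univ_succ, Matrix.one_apply, Matrix.conjTranspose_apply,
      Matrix.star_apply, map_inv₀, Complex.ext_iff]
    ring_nf
    try (field_simp; linarith [hT2])

private lemma s7_Msq (c : ℝ) : s7M c ^ 2 = -1 := by
  set T : ℝ := Real.sqrt (1 + c ^ 2) with hTdef
  have hT2 : T^2 = 1 + c^2 := Real.sq_sqrt (by positivity)
  have hT0 : (0:ℝ) < T := Real.sqrt_pos.mpr (by positivity)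
  have hTne : T ≠ 0 := hT0.ne'
  unfold s7M
  rw [← hTdef, sq]
  ext i j
  fin_cases i <;> fin_cases j <;>
  · simp [Matrix.mul_apply, Fin.sum_univ_succ, Matrix.one_apply, Complex.ext_iff]
    ring_nf
    try (field_simp; linarith [hT2])

private lemma s7_neg_entry (c : ℝ) (a : ℂ) :
    !![-(c*(-a)⁻¹), c^2*(-a)⁻¹ + -a; -(-a)⁻¹, c*(-a)⁻¹]
      = -(!![-((c:ℂ)*a⁻¹), c^2*a⁻¹ + a; -a⁻¹, c*a⁻¹]) := by
  ext i j
  fin_cases i <;> fin_cases j <;> simp [inv_neg] <;> ring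

private lemma s7_main (c : ℝ) (hc : c ≠ 0) :
    s7S c = {1, -1, s7M c, -(s7M c)} ∧
      ∃ x ∈ s7S c, orderOf x = 4 ∧ s7S c = {y | ∃ k : ℕ, y = x ^ k} := by
  set T : ℝ := Real.sqrt (1 + c ^ 2) with hTdef
  have hT2 : T^2 = 1 + c^2 := Real.sq_sqrt (by positivity)
  have hT0 : (0:ℝ) < T := Real.sqrt_pos.mpr (by positivity)
  have hTne : (T:ℂ) ≠ 0 := by exact_mod_cast hT0.ne'
  have hT2c : (T:ℂ)^2 = 1 + (c:ℂ)^2 := by exact_mod_cast congrArg (Complex.ofReal) hT2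
  have hcc : (c:ℂ) ≠ 0 := by exact_mod_cast hc
  have haT : Complex.I * T ≠ 0 := mul_ne_zero Complex.I_ne_zero hTne
  -- M as conjugate
  have hMconj : !![1, (c:ℂ); 0, 1] * !![0, Complex.I*T; -(Complex.I*T)⁻¹, 0] *
      (!![1, (c:ℂ); 0, 1])⁻¹ = s7M c := by
    rw [s7_conj2, s7_Meq, ← hTdef]
  have hMconj' : !![1, (c:ℂ); 0, 1] * !![0, -(Complex.I*T); -(-(Complex.I*T))⁻¹, 0] *
      (!![1, (c:ℂ); 0, 1])⁻¹ = -(s7M c) := by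
    rw [s7_conj2, s7_neg_entry, s7_Meq, ← hTdef]
  have hMmem : s7M c ∈ s7S c := by
    rw [s7_mem_iff]
    refine ⟨⟨Complex.I*T, haT, Or.inr hMconj.symm⟩, ?_⟩
    rw [Matrix.mem_unitaryGroup_iff]
    exact s7_Munit c
  have hMmem' : -(s7M c) ∈ s7S c := by
    rw [s7_mem_iff]
    refine ⟨⟨-(Complex.I*T), neg_ne_zero.mpr haT, Or.inr hMconj'.symm⟩, ?_⟩
    rw [Matrix.mem_unitaryGroup_iff]
    simp [s7_Munit c]
  have h1mem : (1 : Matrix (Fin 2) (Fin 2) ℂ) ∈ s7S c := by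
    rw [s7_mem_iff]
    refine ⟨⟨1, one_ne_zero, Or.inl ?_⟩, ?_⟩
    · rw [s7_conj1]
      ext i j
      fin_cases i <;> fin_cases j <;> norm_num [Matrix.one_apply]
    · rw [Matrix.mem_unitaryGroup_iff]; simp
  have hneg1mem : (-1 : Matrix (Fin 2) (Fin 2) ℂ) ∈ s7S c := by
    rw [s7_mem_iff]
    refine ⟨⟨-1, by norm_num, Or.inl ?_⟩, ?_⟩
    · rw [s7_conj1]
      ext i j
      fin_cases i <;> fin_cases j <;> norm_num [Matrix.one_fin_two]
    · rw [Matrix.mem_unitaryGroup_iff]; simp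
  -- set equality
  have hSeq : s7S c = {1, -1, s7M c, -(s7M c)} := by
    ext g
    constructor
    · intro hg
      rw [s7_mem_iff] at hg
      obtain ⟨⟨a, ha, hcase⟩, hu⟩ := hg
      rw [Matrix.mem_unitaryGroup_iff] at hu
      have hb : (starRingEnd ℂ) a ≠ 0 := by simpa using ha
      rcases hcase with hg | hg
      · rw [s7_conj1] at hg
        subst hg
        have e := congrFun (congrFun hu 0) 1
        simp [Matrix.mul_apply, Fin.sum_univ_succ, Matrix.one_apply, Matrix.conjTranspose_apply,
          Matrix.star_apply, map_inv₀] at e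
        -- e should give a^2 = 1
        have ha2 : (a - 1) * (a + 1) = 0 := by
          field_simp at e
          rcases e with e | e
          · exact mul_left_cancel₀ hcc (by linear_combination -e)
          · exact absurd e ha
        rcases mul_eq_zero.mp ha2 with h | h
        · have : a = 1 := by linear_combination h
          subst this
          left
          ext i j
          fin_cases i <;> fin_cases j <;> norm_num [Matrix.one_fin_two]
        · have : a = -1 := by linear_combination h
          subst this
          right; left
          ext i j
          fin_cases i <;> fin_cases j <;> norm_num [Matrix.one_fin_two]
      · rw [s7_conj2] at hg
        subst hg
        have e := congrFun (congrFun hu 1) 0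
        simp [Matrix.mul_apply, Fin.sum_univ_succ, Matrix.one_apply, Matrix.conjTranspose_apply,
          Matrix.star_apply, map_inv₀] at e
        field_simp at e
        have hb2 : ((starRingEnd ℂ) a)^2 = -(1+(c:ℂ)^2) :=
          mul_left_cancel₀ hcc (by linear_combination e)
        have ha2 : a^2 = -(1+(c:ℂ)^2) := by
          have h' := congrArg (starRingEnd ℂ) hb2
          simpa [map_pow, Complex.conj_conj, Complex.conj_ofReal] using h'
        have hfact : (a - Complex.I*T) * (a + Complex.I*T) = 0 := by
          linear_combination ha2 - (T:ℂ)^2 * Complex.I_sq + hT2c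
        rcases mul_eq_zero.mp hfact with h | h
        · have : a = Complex.I*T := by linear_combination h
          subst this
          right; right; left
          rw [s7_Meq, ← hTdef]
        · have : a = -(Complex.I*T) := by linear_combination h
          subst this
          right; right; right
          rw [s7_neg_entry, s7_Meq, ← hTdef]
          exact Set.mem_singleton _
    · intro hg
      rcases hg with rfl | rfl | rfl | rfl
      exacts [h1mem, hneg1mem, hMmem, hMmem']
  refine ⟨hSeq, s7M c, hMmem, ?_, ?_⟩
  · -- order 4
    have h2 : s7M c ^ 2 ≠ 1 := by
      rw [s7_Msq]
      intro h
      have := congrFun (congrFun h 0) 0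
      simp [Matrix.one_apply, Matrix.neg_apply] at this
      norm_num at this
    have h4 : s7M c ^ 4 = 1 := by
      have : s7M c ^ 4 = (s7M c ^ 2) ^ 2 := by rw [← pow_mul]
      rw [this, s7_Msq]; norm_num
    have := orderOf_eq_prime_pow (x := s7M c) (p := 2) (n := 1)
      (by simpa using h2) (by norm_num; simpa using h4)
    simpa using this
  · rw [hSeq]
    have h4 : s7M c ^ 4 = 1 := by
      have : s7M c ^ 4 = (s7M c ^ 2) ^ 2 := by rw [← pow_mul]
      rw [this, s7_Msq]; norm_num
    ext y
    simp only [Set.mem_insert_iff, Set.mem_singleton_iff, Set.mem_setOf_eq]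
    constructor
    · rintro (rfl | rfl | rfl | rfl)
      · exact ⟨0, by simp⟩
      · exact ⟨2, by rw [s7_Msq]⟩
      · exact ⟨1, by simp⟩
      · exact ⟨3, by rw [pow_succ, s7_Msq]; simp⟩
    · rintro ⟨k, rfl⟩
      rw [pow_eq_pow_mod k h4]
      have hk : k % 4 = 0 ∨ k % 4 = 1 ∨ k % 4 = 2 ∨ k % 4 = 3 := by omega
      rcases hk with h | h | h | h <;> rw [h]
      · left; simp
      · right; right; left; simp
      · right; left; rw [s7_Msq]
      · right; right; right; rw [pow_succ, s7_Msq]; simp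


/-- For real `c ≠ 0` and `h₀ = (1,c;0,1)`, the intersection `h₀ S₂ h₀⁻¹ ∩ SU(2)` is a cyclic
group of order 4, consisting of `±I` and `±(1/√(1+c²))·(ic, i; i, -ic)`. -/
theorem stmt_7 (c : ℝ) (hc : c ≠ 0) :
    let M : Matrix (Fin 2) (Fin 2) ℂ :=
      ((1 / Real.sqrt (1 + c ^ 2) : ℝ) : ℂ) •
        !![Complex.I * (c : ℂ), Complex.I; Complex.I, -(Complex.I * (c : ℂ))]
    let S : Set (Matrix (Fin 2) (Fin 2) ℂ) :=
      {g | (∃ a : ℂ, a ≠ 0 ∧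
              (g = !![1, (c : ℂ); 0, 1] * !![a, 0; 0, a⁻¹] * (!![1, (c : ℂ); 0, 1])⁻¹ ∨
               g = !![1, (c : ℂ); 0, 1] * !![0, a; -a⁻¹, 0] * (!![1, (c : ℂ); 0, 1])⁻¹)) ∧
           g ∈ Matrix.unitaryGroup (Fin 2) ℂ}
    S = {1, -1, M, -M} ∧ ∃ x ∈ S, orderOf x = 4 ∧ S = {y | ∃ k : ℕ, y = x ^ k} := by
  intro M S
  exact s7_main c hc
end

section
/- The map π : ℂℙ² \ {(1:0:0)} → ℂℙ³ defined by w₀=z₀², w₁=z₁²−(z₁z̄₂/(|z₁|²+|z₂|²))z₀², w₂=z₂²+(z̄₁z₂/(|z₁|²+|z₂|²))z₀², w₃=z₁z₂−(|z₂|²/(|z₁|²+|z₂|²))z₀² satisfies π(x) = π(y) if and only if the homogeneous coordinate vectors of x and y are proportional up to sign, i.e., π is everywhere 2-to-1. -/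
open Complex

/-- The lift of Rossi's map `π : ℂℙ² \ {(1:0:0)} → ℂℙ³` on homogeneous coordinates. -/
noncomputable def rossiPi (z : Fin 3 → ℂ) : Fin 4 → ℂ :=
  ![z 0 ^ 2,
    z 1 ^ 2 - (z 1 * (starRingEnd ℂ) (z 2) / ((normSq (z 1) : ℂ) + (normSq (z 2) : ℂ))) * z 0 ^ 2,
    z 2 ^ 2 + ((starRingEnd ℂ) (z 1) * z 2 / ((normSq (z 1) : ℂ) + (normSq (z 2) : ℂ))) * z 0 ^ 2,
    z 1 * z 2 - ((normSq (z 2) : ℂ) / ((normSq (z 1) : ℂ) + (normSq (z 2) : ℂ))) * z 0 ^ 2]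

lemma rossiPi_apply (z : Fin 3 → ℂ) (hz : normSq (z 1) + normSq (z 2) = 1) :
    rossiPi z = ![z 0 ^ 2,
      z 1 ^ 2 - z 1 * (starRingEnd ℂ) (z 2) * z 0 ^ 2,
      z 2 ^ 2 + (starRingEnd ℂ) (z 1) * z 2 * z 0 ^ 2,
      z 1 * z 2 - z 2 * (starRingEnd ℂ) (z 2) * z 0 ^ 2] := by
  have hD : ((normSq (z 1) : ℂ) + (normSq (z 2) : ℂ)) = 1 := by
    rw [← ofReal_add, hz, ofReal_one]
  unfold rossiPi
  rw [hD]
  funext i; fin_cases i <;> simp [← Complex.mul_conj]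

/-- Rossi's map `π` is everywhere 2-to-1: for normalized homogeneous lifts `z, z'`
(`|z₁|² + |z₂|² = 1`), the images `π(z)` and `π(z')` agree as projective points if and only
if the points of `ℂℙ²` represented by `z` and `z'` are equal up to the sign involution
`(z₀ : z₁ : z₂) ↦ (z₀ : -z₁ : -z₂)`. -/
theorem stmt_11 (z z' : Fin 3 → ℂ)
    (hz : normSq (z 1) + normSq (z 2) = 1) (hz' : normSq (z' 1) + normSq (z' 2) = 1) :
    (∃ μ : ℂ, μ ≠ 0 ∧ rossiPi z' = μ • rossiPi z)
      ↔ (∃ lam : ℂ, lam ≠ 0 ∧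
          (z' = lam • z ∨ z' = lam • ![z 0, -z 1, -z 2])) := by
  have hN : z 1 * (starRingEnd ℂ) (z 1) + z 2 * (starRingEnd ℂ) (z 2) = 1 := by
    rw [mul_conj, mul_conj, ← ofReal_add, hz, ofReal_one]
  have hN' : z' 1 * (starRingEnd ℂ) (z' 1) + z' 2 * (starRingEnd ℂ) (z' 2) = 1 := by
    rw [mul_conj, mul_conj, ← ofReal_add, hz', ofReal_one]
  constructor
  · rintro ⟨μ, hμ, h⟩
    rw [rossiPi_apply z hz, rossiPi_apply z' hz'] at h
    have e0 := congrFun h 0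
    have e1 := congrFun h 1
    have e2 := congrFun h 2
    have e3 := congrFun h 3
    simp only [Matrix.cons_val_zero, Matrix.cons_val_one, Matrix.head_cons,
      Matrix.cons_val_two, Matrix.cons_val_three, Matrix.tail_cons,
      Pi.smul_apply, smul_eq_mul] at e0 e1 e2 e3
    set a := z 0 with ha; set b := z 1 with hb; set c := z 2 with hc
    set a' := z' 0 with ha'; set b' := z' 1 with hb'; set c' := z' 2 with hc'
    set bb := (starRingEnd ℂ) b with hbbdef
    set cc := (starRingEnd ℂ) c with hccdef
    set bb' := (starRingEnd ℂ) b' with hbbdef'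
    set cc' := (starRingEnd ℂ) c' with hccdef'
    set w0 := a ^ 2 with hw0
    set w1 := b ^ 2 - b * cc * a ^ 2 with hw1
    set w2 := c ^ 2 + bb * c * a ^ 2 with hw2
    set w3 := b * c - c * cc * a ^ 2 with hw3
    have hA : c' * w1 = b' * w3 := by
      have : μ * (c' * w1) = μ * (b' * w3) := by
        linear_combination b' * e3 - c' * e1
      exact mul_left_cancel₀ hμ this
    have hB : b' * w2 = c' * (w3 + w0) := by
      have : μ * (b' * w2) = μ * (c' * (w3 + w0)) := by
        linear_combination -(b' * e2) + c' * e3 + c' * e0 + c' * a' ^ 2 * hN'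
      exact mul_left_cancel₀ hμ this
    have hAz : c * w1 = b * w3 := by rw [hw1, hw3]; ring
    have hBz : b * w2 = c * (w3 + w0) := by
      rw [hw0, hw2, hw3]; linear_combination c * a ^ 2 * hN
    set δ := b * c' - b' * c with hδdef
    have hδ1 : δ * w1 = 0 := by linear_combination b * hA - b' * hAz
    have hδ3 : δ * w3 = 0 := by linear_combination c * hA - c' * hAz
    have hδ2 : δ * w2 = 0 := by linear_combination c' * hBz - c * hB
    have hδ0 : δ * w0 = 0 := by linear_combination b' * hBz - b * hB - hδ3
    have hδ : δ = 0 := by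
      by_contra hne
      have h0 : w0 = 0 := by
        rcases mul_eq_zero.mp hδ0 with h | h
        · exact absurd h hne
        · exact h
      have ha0 : a = 0 := pow_eq_zero_iff (two_ne_zero) |>.mp h0
      have h1 : w1 = 0 := by
        rcases mul_eq_zero.mp hδ1 with h | h
        · exact absurd h hne
        · exact h
      have h2 : w2 = 0 := by
        rcases mul_eq_zero.mp hδ2 with h | h
        · exact absurd h hne
        · exact h
      have hb0 : b = 0 := by
        have hb2 : b ^ 2 = 0 := by rw [hw1, ha0] at h1; linear_combination h1
        exact pow_eq_zero_iff (two_ne_zero) |>.mp hb2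
      have hc0 : c = 0 := by
        have hc2 : c ^ 2 = 0 := by rw [hw2, ha0] at h2; linear_combination h2
        exact pow_eq_zero_iff (two_ne_zero) |>.mp hc2
      rw [hb0, hc0] at hN
      simp at hN
    obtain ⟨t, htb, htc⟩ : ∃ t : ℂ, b' = t * b ∧ c' = t * c := by
      by_cases hb0 : b = 0
      · have hc0 : c ≠ 0 := by
          intro hc0; rw [hb0, hc0] at hN; simp at hN
        have hbc : b' * c = 0 := by
          rw [hδdef, hb0] at hδ; linear_combination -hδ
        have hb'0 : b' = 0 := by
          rcases mul_eq_zero.mp hbc with h | h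
          · exact h
          · exact absurd h hc0
        exact ⟨c' / c, by rw [hb'0, hb0]; ring, by field_simp⟩
      · refine ⟨b' / b, by field_simp, ?_⟩
        rw [hδdef] at hδ
        field_simp
        linear_combination hδ
    have hcb' : bb' = (starRingEnd ℂ) t * bb := by
      rw [hbbdef', htb, map_mul, hbbdef]
    have hcc' : cc' = (starRingEnd ℂ) t * cc := by
      rw [hccdef', htc, map_mul, hccdef]
    have ht1 : t * (starRingEnd ℂ) t = 1 := by
      calc t * (starRingEnd ℂ) t = t * (starRingEnd ℂ) t * (b * bb + c * cc) := by
            rw [hN]; ring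
        _ = b' * bb' + c' * cc' := by rw [htb, htc, hcb', hcc']; ring
        _ = 1 := hN'
    have ht0 : t ≠ 0 := left_ne_zero_of_mul_eq_one ht1
    have hμt : μ = t ^ 2 := by
      rw [htb, hcc'] at e1
      rw [htc, hcb'] at e2
      by_cases hb0 : b = 0
      · have hc0 : c ≠ 0 := by
          intro hc0; rw [hb0, hc0] at hN; simp at hN
        have hbb0 : bb = 0 := by rw [hbbdef, hb0, map_zero]
        have key : t ^ 2 * c ^ 2 = μ * c ^ 2 := by
          linear_combination e2 + μ * hw2 -
            (t * (starRingEnd ℂ) t * c * a' ^ 2 - μ * c * a ^ 2) * hbb0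
        exact (mul_right_cancel₀ (pow_ne_zero 2 hc0) key).symm
      · have key : t ^ 2 * b ^ 2 = μ * b ^ 2 := by
          linear_combination e1 + μ * hw1 + (t * (starRingEnd ℂ) t * b * cc) * e0 +
            (t * (starRingEnd ℂ) t * μ * b * cc) * hw0 + (μ * b * cc * a ^ 2) * ht1
        exact (mul_right_cancel₀ (pow_ne_zero 2 hb0) key).symm
    have hsq : (a' - t * a) * (a' + t * a) = 0 := by
      rw [hμt] at e0
      linear_combination e0 + t ^ 2 * hw0
    rcases mul_eq_zero.mp hsq with hcase | hcase
    · refine ⟨t, ht0, Or.inl ?_⟩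
      funext i; fin_cases i
      · show z' 0 = t * z 0
        rw [← ha', ← ha]; linear_combination hcase
      · show z' 1 = t * z 1
        exact htb
      · show z' 2 = t * z 2
        exact htc
    · refine ⟨-t, neg_ne_zero.mpr ht0, Or.inr ?_⟩
      funext i; fin_cases i
      · show z' 0 = -t * z 0
        rw [← ha', ← ha]; linear_combination hcase
      · show z' 1 = -t * -z 1
        rw [neg_mul_neg]; exact htb
      · show z' 2 = -t * -z 2
        rw [neg_mul_neg]; exact htc
  · rintro ⟨lam, hlam, hcase | hcase⟩ <;> subst hcase
    · have h1 : normSq lam * normSq (z 1) + normSq lam * normSq (z 2) = 1 := by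
        simpa [normSq_mul] using hz'
      have h2 : normSq lam = 1 := by linear_combination h1 - normSq lam * hz
      have hl : lam * (starRingEnd ℂ) lam = 1 := by rw [mul_conj, h2, ofReal_one]
      refine ⟨lam ^ 2, pow_ne_zero 2 hlam, ?_⟩
      rw [rossiPi_apply z hz, rossiPi_apply (lam • z) hz']
      funext i; fin_cases i
      · show (lam * z 0) ^ 2 = lam ^ 2 * z 0 ^ 2
        ring
      · show (lam * z 1) ^ 2 - (lam * z 1) * (starRingEnd ℂ) (lam * z 2) * (lam * z 0) ^ 2
            = lam ^ 2 * (z 1 ^ 2 - z 1 * (starRingEnd ℂ) (z 2) * z 0 ^ 2)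
        rw [map_mul]
        linear_combination (-(lam ^ 2 * z 1 * (starRingEnd ℂ) (z 2) * z 0 ^ 2)) * hl
      · show (lam * z 2) ^ 2 + (starRingEnd ℂ) (lam * z 1) * (lam * z 2) * (lam * z 0) ^ 2
            = lam ^ 2 * (z 2 ^ 2 + (starRingEnd ℂ) (z 1) * z 2 * z 0 ^ 2)
        rw [map_mul]
        linear_combination (lam ^ 2 * (starRingEnd ℂ) (z 1) * z 2 * z 0 ^ 2) * hl
      · show (lam * z 1) * (lam * z 2) - (lam * z 2) * (starRingEnd ℂ) (lam * z 2) * (lam * z 0) ^ 2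
            = lam ^ 2 * (z 1 * z 2 - z 2 * (starRingEnd ℂ) (z 2) * z 0 ^ 2)
        rw [map_mul]
        linear_combination (-(lam ^ 2 * z 2 * (starRingEnd ℂ) (z 2) * z 0 ^ 2)) * hl
    · have h1 : normSq lam * normSq (z 1) + normSq lam * normSq (z 2) = 1 := by
        simpa [normSq_mul] using hz'
      have h2 : normSq lam = 1 := by linear_combination h1 - normSq lam * hz
      have hl : lam * (starRingEnd ℂ) lam = 1 := by rw [mul_conj, h2, ofReal_one]
      refine ⟨lam ^ 2, pow_ne_zero 2 hlam, ?_⟩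
      rw [rossiPi_apply z hz, rossiPi_apply (lam • ![z 0, -z 1, -z 2]) hz']
      funext i; fin_cases i
      · show (lam * z 0) ^ 2 = lam ^ 2 * z 0 ^ 2
        ring
      · show (lam * -z 1) ^ 2 - (lam * -z 1) * (starRingEnd ℂ) (lam * -z 2) * (lam * z 0) ^ 2
            = lam ^ 2 * (z 1 ^ 2 - z 1 * (starRingEnd ℂ) (z 2) * z 0 ^ 2)
        rw [map_mul, map_neg]
        linear_combination (-(lam ^ 2 * z 1 * (starRingEnd ℂ) (z 2) * z 0 ^ 2)) * hl
      · show (lam * -z 2) ^ 2 + (starRingEnd ℂ) (lam * -z 1) * (lam * -z 2) * (lam * z 0) ^ 2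
            = lam ^ 2 * (z 2 ^ 2 + (starRingEnd ℂ) (z 1) * z 2 * z 0 ^ 2)
        rw [map_mul, map_neg]
        linear_combination (lam ^ 2 * (starRingEnd ℂ) (z 1) * z 2 * z 0 ^ 2) * hl
      · show (lam * -z 1) * (lam * -z 2) - (lam * -z 2) * (starRingEnd ℂ) (lam * -z 2) * (lam * z 0) ^ 2
            = lam ^ 2 * (z 1 * z 2 - z 2 * (starRingEnd ℂ) (z 2) * z 0 ^ 2)
        rw [map_mul, map_neg]
        linear_combination (-(lam ^ 2 * z 2 * (starRingEnd ℂ) (z 2) * z 0 ^ 2)) * hl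
end

section
/- Let n ≥ 2 and let 𝔤 be the Lie subalgebra of 𝔰𝔩(n,ℂ) of matrices with first column (−tr α, 0, …, 0)ᵀ, first row (−tr α, β) with β ∈ ℂ^{n-1}, and lower-right (n−1)×(n−1) block α ∈ 𝔤𝔩(n−1,ℂ). If 𝔥 ⊂ 𝔤 is a complex Lie subalgebra of complex codimension 1 that is an ideal of 𝔤, then 𝔥 equals the subalgebra where α is additionally required to be traceless (α ∈ 𝔰𝔩(n−1,ℂ)). -/
/-- The parabolic subalgebra `𝔤 ⊂ 𝔰𝔩(n+1,ℂ)` of traceless matrices whose first column is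
`(-tr α, 0, …, 0)ᵀ` (first row `(-tr α, β)`, lower-right block `α ∈ 𝔤𝔩(n,ℂ)`), viewed as a
`ℂ`-submodule of the matrix algebra. -/
noncomputable def parSub (n : ℕ) : Submodule ℂ (Matrix (Fin (n + 1)) (Fin (n + 1)) ℂ) where
  carrier := {x | x.trace = 0 ∧ ∀ i, i ≠ 0 → x i 0 = 0}
  add_mem' := fun ha hb =>
    ⟨by simp [Matrix.trace_add, ha.1, hb.1],
     fun i hi => by simp [Matrix.add_apply, ha.2 i hi, hb.2 i hi]⟩
  zero_mem' := ⟨by simp, fun i _ => rfl⟩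
  smul_mem' := fun c x hx =>
    ⟨by simp [Matrix.trace_smul, hx.1], fun i hi => by simp [Matrix.smul_apply, hx.2 i hi]⟩

/-- If `𝔥 ⊂ 𝔤` is a complex Lie subalgebra of complex codimension 1 that is an ideal of
`𝔤`, then `𝔥` is the subalgebra of those elements of `𝔤` whose lower-right block `α` is
traceless (`α ∈ 𝔰𝔩(n,ℂ)`). Here `n ≥ 2` is encoded as size `n + 1` with `1 ≤ n`. -/
theorem stmt_15 (n : ℕ) (hn : 1 ≤ n)
    (𝔥 : Submodule ℂ (Matrix (Fin (n + 1)) (Fin (n + 1)) ℂ))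
    (hle : 𝔥 ≤ parSub n)
    (hideal : ∀ x ∈ parSub n, ∀ y ∈ 𝔥, x * y - y * x ∈ 𝔥)
    (hcodim : Module.finrank ℂ (parSub n) = Module.finrank ℂ 𝔥 + 1) :
    (𝔥 : Set (Matrix (Fin (n + 1)) (Fin (n + 1)) ℂ))
      = {x | x ∈ parSub n ∧ (x.submatrix Fin.succ Fin.succ).trace = 0} := by
  have hmem : ∀ x, x ∈ parSub n ↔ x.trace = 0 ∧ ∀ i, i ≠ 0 → x i 0 = 0 := fun _ => Iff.rfl
  have hd : ∀ x : Matrix (Fin (n+1)) (Fin (n+1)) ℂ,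
      x.trace = x 0 0 + ∑ i : Fin n, x i.succ i.succ := by
    intro x; simp [Matrix.trace, Matrix.diag, Fin.sum_univ_succ]
  have hsubt : ∀ x : Matrix (Fin (n+1)) (Fin (n+1)) ℂ,
      (x.submatrix Fin.succ Fin.succ).trace = ∑ i : Fin n, x i.succ i.succ := by
    intro x; simp [Matrix.trace, Matrix.diag, Matrix.submatrix]
  -- there is z ∈ parSub \ 𝔥
  obtain ⟨z, hzg, hzh⟩ : ∃ z ∈ parSub n, z ∉ 𝔥 := by
    by_contra h; push_neg at h
    have : 𝔥 = parSub n := le_antisymm hle h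
    rw [this] at hcodim; omega
  have hsup : 𝔥 ⊔ (ℂ ∙ z) = parSub n := by
    have h1 : 𝔥 ⊔ (ℂ ∙ z) ≤ parSub n :=
      sup_le hle ((Submodule.span_singleton_le_iff_mem _ _).2 hzg)
    have h2 : 𝔥 < 𝔥 ⊔ (ℂ ∙ z) := by
      refine lt_of_le_of_ne le_sup_left (fun he => hzh ?_)
      rw [he]
      exact (le_sup_right : (ℂ ∙ z) ≤ _) (Submodule.mem_span_singleton_self z)
    have h3 := Submodule.finrank_lt_finrank_of_lt h2
    exact Submodule.eq_of_le_of_finrank_le h1 (by omega)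
  have hbz : ∀ x ∈ parSub n, x * z - z * x ∈ 𝔥 := by
    intro x hx
    rw [← hsup] at hx
    obtain ⟨h, hh, w, hw, rfl⟩ := Submodule.mem_sup.mp hx
    obtain ⟨c, rfl⟩ := Submodule.mem_span_singleton.mp hw
    have he : (h + c • z) * z - z * (h + c • z) = -(z * h - h * z) := by
      simp only [add_mul, mul_add, smul_mul_assoc, mul_smul_comm]
      abel
    rw [he]
    exact neg_mem (hideal z hzg h hh)
  have claimA : ∀ x ∈ parSub n, ∀ y ∈ parSub n, x * y - y * x ∈ 𝔥 := by
    intro x hx y hy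
    rw [← hsup] at hy
    obtain ⟨h, hh, w, hw, rfl⟩ := Submodule.mem_sup.mp hy
    obtain ⟨c, rfl⟩ := Submodule.mem_span_singleton.mp hw
    have he : x * (h + c • z) - (h + c • z) * x
        = (x * h - h * x) + c • (x * z - z * x) := by
      simp only [add_mul, mul_add, smul_mul_assoc, mul_smul_comm, smul_sub]
      abel
    rw [he]
    exact add_mem (hideal x hx h hh) (Submodule.smul_mem _ _ (hbz x hx))
  -- index 1
  set o : Fin (n+1) := ⟨1, by omega⟩ with ho
  have ho0 : o ≠ 0 := by simp [ho, Fin.ext_iff]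
  -- K ⊆ 𝔥
  have hK : ∀ x ∈ parSub n, x 0 0 = 0 → x ∈ 𝔥 := by
    intro x hx hx0
    set d : Fin (n+1) → ℂ := fun i => ((i : ℕ) : ℂ) - n / 2 with hdd
    have hdinj : ∀ i j : Fin (n+1), i ≠ j → d i - d j ≠ 0 := by
      intro i j hij
      have hvv : ((i : ℕ) : ℂ) ≠ ((j : ℕ) : ℂ) := by
        intro h
        exact hij (Fin.ext (by exact_mod_cast h))
      simp only [hdd]
      intro h
      apply hvv
      linear_combination h
    set D := Matrix.diagonal d with hD
    have hDg : D ∈ parSub n := by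
      constructor
      · have h2 : (∑ i ∈ Finset.range (n+1), (i : ℂ)) * 2 = ((n : ℂ) + 1) * n := by
          have h0 := Finset.sum_range_id_mul_two (n+1)
          simp only [Nat.add_sub_cancel] at h0
          have h1 := congrArg (Nat.cast : ℕ → ℂ) h0
          push_cast at h1
          exact h1
        have hs : ∑ i : Fin (n+1), ((i : ℕ) : ℂ) = ∑ i ∈ Finset.range (n+1), (i : ℂ) :=
          Fin.sum_univ_eq_sum_range (fun i => (i : ℂ)) (n+1)
        simp only [hD, Matrix.trace_diagonal, hdd]
        rw [Finset.sum_sub_distrib, hs]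
        simp only [Finset.sum_const, Finset.card_univ, Fintype.card_fin, nsmul_eq_mul]
        push_cast
        linear_combination h2 / 2
      · intro i hi
        simp [hD, Matrix.diagonal_apply_ne _ hi]
    set β : Matrix (Fin (n+1)) (Fin (n+1)) ℂ :=
      Matrix.of (fun i j => if i = j then 0 else x i j / (d i - d j)) with hβ
    have hβg : β ∈ parSub n := by
      constructor
      · simp [Matrix.trace, Matrix.diag, hβ]
      · intro i hi
        simp [hβ, hi, hx.2 i hi]
    have hcomm : D * β - β * D = Matrix.of (fun i j => if i = j then 0 else x i j) := by
      ext i j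
      by_cases hij : i = j
      · subst hij
        simp [hD, hβ, Matrix.diagonal_mul, Matrix.mul_diagonal]
      · simp only [hD, hβ, Matrix.sub_apply, Matrix.diagonal_mul, Matrix.mul_diagonal,
          Matrix.of_apply, if_neg hij]
        field_simp [hdinj i j hij]
    have hsum0 : ∑ i : Fin n, x i.succ i.succ = 0 := by
      have h1 := hd x
      rw [hx.1, hx0] at h1
      linear_combination -h1
    have key : x = (D * β - β * D) + ∑ a : Fin n, x a.succ a.succ •
        (Matrix.single a.succ o 1 * Matrix.single o a.succ 1
          - Matrix.single o a.succ 1 * Matrix.single a.succ o 1) := by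
      rw [hcomm]
      ext i j
      have hent : ∀ (a b : Fin (n+1)) (c : ℂ),
          Matrix.single a b c i j = if a = i ∧ b = j then c else 0 := fun _ _ _ => rfl
      simp only [Matrix.single_mul_single_same, one_mul, Matrix.add_apply, Matrix.sub_apply,
        Matrix.sum_apply, Matrix.smul_apply, Matrix.of_apply, smul_eq_mul, hent]
      by_cases hij : i = j
      · subst hij
        simp only [eq_self_iff_true, if_true, and_self, zero_add]
        by_cases hi0 : i = 0
        · subst hi0
          have hz : ∀ a : Fin n, (if a.succ = (0 : Fin (n+1)) then (1:ℂ) else 0)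
              - (if o = (0 : Fin (n+1)) then (1:ℂ) else 0) = 0 := by
            intro a; simp [Fin.succ_ne_zero, ho0]
          rw [Finset.sum_eq_zero (fun a _ => by simp [Fin.succ_ne_zero, ho0])]
          simpa using hx0
        · obtain ⟨b, rfl⟩ := Fin.eq_succ_of_ne_zero hi0
          have hrw : ∀ a : Fin n, x a.succ a.succ *
              ((if a.succ = b.succ then (1:ℂ) else 0)
                - (if o = b.succ then (1:ℂ) else 0))
              = (if a = b then x a.succ a.succ else 0)
                - (if o = b.succ then x a.succ a.succ else 0) := by
            intro a
            by_cases hab : a = b <;> by_cases hob : o = b.succ <;>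
              simp [hab, hob, Fin.succ_inj, mul_sub]
          rw [Finset.sum_congr rfl (fun a _ => hrw a), Finset.sum_sub_distrib,
            Finset.sum_ite_eq' Finset.univ b (fun a => x a.succ a.succ),
            if_pos (Finset.mem_univ b)]
          by_cases hob : o = b.succ
          · simp [hob, hsum0]
          · simp [hob]
      · have : ∀ a : Fin n, x a.succ a.succ *
            ((if a.succ = i ∧ a.succ = j then (1:ℂ) else 0)
              - (if o = i ∧ o = j then (1:ℂ) else 0)) = 0 := by
          intro a
          have h1 : ¬(a.succ = i ∧ a.succ = j) := fun ⟨p, q⟩ => hij (p ▸ q)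
          have h2 : ¬(o = i ∧ o = j) := fun ⟨p, q⟩ => hij (p ▸ q)
          simp [h1, h2]
        rw [if_neg hij, Finset.sum_eq_zero (fun a _ => this a), add_zero]
    rw [key]
    refine add_mem (claimA D hDg β hβg) (Submodule.sum_mem _ ?_)
    intro a _
    by_cases hao : a.succ = o
    · rw [hao]
      simp only [sub_self, smul_zero]
      exact zero_mem _
    · have hE1 : Matrix.single a.succ o (1:ℂ) ∈ parSub n := by
        constructor
        · exact Matrix.trace_single_eq_of_ne _ _ _ hao
        · intro i hi
          exact Matrix.single_apply_of_ne _ _ _ _ _ (by tauto)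
      have hE2 : Matrix.single o a.succ (1:ℂ) ∈ parSub n := by
        constructor
        · exact Matrix.trace_single_eq_of_ne _ _ _ (fun h => hao h.symm)
        · intro i hi
          refine Matrix.single_apply_of_ne _ _ _ _ _ ?_
          rintro ⟨rfl, h⟩
          exact Fin.succ_ne_zero a h
      exact Submodule.smul_mem _ _ (claimA _ hE1 _ hE2)
  -- 𝔥 ⊆ K
  have hKrev : ∀ w ∈ 𝔥, w 0 0 = 0 := by
    intro w hw
    by_contra hw0
    have hsub : parSub n ≤ 𝔥 := by
      intro x hx
      have hmul : (x 0 0 / w 0 0) • w ∈ parSub n := Submodule.smul_mem _ _ (hle hw)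
      have h1 : x - (x 0 0 / w 0 0) • w ∈ 𝔥 := by
        refine hK _ (sub_mem hx hmul) ?_
        simp only [Matrix.sub_apply, Matrix.smul_apply, smul_eq_mul]
        field_simp
        ring
      have := add_mem h1 (Submodule.smul_mem 𝔥 (x 0 0 / w 0 0) hw)
      simpa using this
    have : 𝔥 = parSub n := le_antisymm hle hsub
    rw [this] at hcodim; omega
  ext x
  simp only [Set.mem_setOf_eq, SetLike.mem_coe]
  constructor
  · intro hx
    refine ⟨hle hx, ?_⟩
    have h1 := hd x
    rw [(hle hx).1, hKrev x hx] at h1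
    rw [hsubt]
    linear_combination -h1
  · rintro ⟨hx, hxt⟩
    refine hK x hx ?_
    have h1 := hd x
    rw [hsubt] at hxt
    rw [hx.1, hxt] at h1
    linear_combination -h1
end
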